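/- Q_5 can be decomposed into paths of length 4. -/

import Mathlib

/-- The `n`-dimensional hypercube graph on `{0,1}^n`: two vertices are adjacent
iff they differ in exactly one coordinate. -/
def Q (n : ℕ) : SimpleGraph (Fin n → ZMod 2) where
  Adj x y := hammingDist x y = 1
  symm := ⟨fun x y h => by simpa [hammingDist_comm] using h⟩
  loopless := ⟨fun x h => by simp [hammingDist_self] at h⟩

/-- A decomposition of a graph `G` into paths of length `k`: a family of paths,
each with `k` edges, such that every edge of `G` lies in exactly one of them. -/
def PathDecomp {V : Type*} (G : SimpleGraph V) (k : ℕ) : Prop :=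
  ∃ (ι : Type) (u v : ι → V) (w : ∀ i : ι, G.Walk (u i) (v i)),
    (∀ i, (w i).IsPath ∧ (w i).length = k) ∧
    ∀ e ∈ G.edgeSet, ∃! i, e ∈ (w i).edges

instance (n : ℕ) : DecidableRel (Q n).Adj :=
  fun x y => inferInstanceAs (Decidable (hammingDist x y = 1))

def w0 : (Q 5).Walk ![0,0,1,0,1] ![1,1,0,0,0] :=
  .cons (show (Q 5).Adj ![0,0,1,0,1] ![0,0,1,0,0] by decide) (.cons (show (Q 5).Adj ![0,0,1,0,0] ![1,0,1,0,0] by decide) (.cons (show (Q 5).Adj ![1,0,1,0,0] ![1,1,1,0,0] by decide) (.cons (show (Q 5).Adj ![1,1,1,0,0] ![1,1,0,0,0] by decide) (.nil))))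
def w1 : (Q 5).Walk ![0,0,1,0,0] ![1,0,1,1,0] :=
  .cons (show (Q 5).Adj ![0,0,1,0,0] ![0,1,1,0,0] by decide) (.cons (show (Q 5).Adj ![0,1,1,0,0] ![1,1,1,0,0] by decide) (.cons (show (Q 5).Adj ![1,1,1,0,0] ![1,1,1,1,0] by decide) (.cons (show (Q 5).Adj ![1,1,1,1,0] ![1,0,1,1,0] by decide) (.nil))))
def w2 : (Q 5).Walk ![1,1,1,0,0] ![0,1,1,1,0] :=
  .cons (show (Q 5).Adj ![1,1,1,0,0] ![1,1,1,0,1] by decide) (.cons (show (Q 5).Adj ![1,1,1,0,1] ![1,1,1,1,1] by decide) (.cons (show (Q 5).Adj ![1,1,1,1,1] ![1,1,1,1,0] by decide) (.cons (show (Q 5).Adj ![1,1,1,1,0] ![0,1,1,1,0] by decide) (.nil))))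
def w3 : (Q 5).Walk ![1,1,1,1,0] ![1,1,1,0,1] :=
  .cons (show (Q 5).Adj ![1,1,1,1,0] ![1,1,0,1,0] by decide) (.cons (show (Q 5).Adj ![1,1,0,1,0] ![1,1,0,0,0] by decide) (.cons (show (Q 5).Adj ![1,1,0,0,0] ![1,1,0,0,1] by decide) (.cons (show (Q 5).Adj ![1,1,0,0,1] ![1,1,1,0,1] by decide) (.nil))))
def w4 : (Q 5).Walk ![1,1,0,0,0] ![0,1,0,1,0] :=
  .cons (show (Q 5).Adj ![1,1,0,0,0] ![0,1,0,0,0] by decide) (.cons (show (Q 5).Adj ![0,1,0,0,0] ![0,1,1,0,0] by decide) (.cons (show (Q 5).Adj ![0,1,1,0,0] ![0,1,1,1,0] by decide) (.cons (show (Q 5).Adj ![0,1,1,1,0] ![0,1,0,1,0] by decide) (.nil))))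
def w5 : (Q 5).Walk ![0,1,1,0,0] ![1,0,1,0,0] :=
  .cons (show (Q 5).Adj ![0,1,1,0,0] ![0,1,1,0,1] by decide) (.cons (show (Q 5).Adj ![0,1,1,0,1] ![1,1,1,0,1] by decide) (.cons (show (Q 5).Adj ![1,1,1,0,1] ![1,0,1,0,1] by decide) (.cons (show (Q 5).Adj ![1,0,1,0,1] ![1,0,1,0,0] by decide) (.nil))))
def w6 : (Q 5).Walk ![1,1,0,0,0] ![1,0,1,1,1] :=
  .cons (show (Q 5).Adj ![1,1,0,0,0] ![1,0,0,0,0] by decide) (.cons (show (Q 5).Adj ![1,0,0,0,0] ![1,0,1,0,0] by decide) (.cons (show (Q 5).Adj ![1,0,1,0,0] ![1,0,1,1,0] by decide) (.cons (show (Q 5).Adj ![1,0,1,1,0] ![1,0,1,1,1] by decide) (.nil))))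
def w7 : (Q 5).Walk ![1,0,1,1,0] ![1,0,0,0,0] :=
  .cons (show (Q 5).Adj ![1,0,1,1,0] ![0,0,1,1,0] by decide) (.cons (show (Q 5).Adj ![0,0,1,1,0] ![0,0,1,0,0] by decide) (.cons (show (Q 5).Adj ![0,0,1,0,0] ![0,0,0,0,0] by decide) (.cons (show (Q 5).Adj ![0,0,0,0,0] ![1,0,0,0,0] by decide) (.nil))))
def w8 : (Q 5).Walk ![1,0,1,1,0] ![1,0,1,0,1] :=
  .cons (show (Q 5).Adj ![1,0,1,1,0] ![1,0,0,1,0] by decide) (.cons (show (Q 5).Adj ![1,0,0,1,0] ![1,0,0,0,0] by decide) (.cons (show (Q 5).Adj ![1,0,0,0,0] ![1,0,0,0,1] by decide) (.cons (show (Q 5).Adj ![1,0,0,0,1] ![1,0,1,0,1] by decide) (.nil))))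
def w9 : (Q 5).Walk ![1,0,1,0,1] ![1,1,0,1,0] :=
  .cons (show (Q 5).Adj ![1,0,1,0,1] ![1,0,1,1,1] by decide) (.cons (show (Q 5).Adj ![1,0,1,1,1] ![1,1,1,1,1] by decide) (.cons (show (Q 5).Adj ![1,1,1,1,1] ![1,1,0,1,1] by decide) (.cons (show (Q 5).Adj ![1,1,0,1,1] ![1,1,0,1,0] by decide) (.nil))))
def w10 : (Q 5).Walk ![1,1,1,1,1] ![0,0,0,1,0] :=
  .cons (show (Q 5).Adj ![1,1,1,1,1] ![0,1,1,1,1] by decide) (.cons (show (Q 5).Adj ![0,1,1,1,1] ![0,1,1,1,0] by decide) (.cons (show (Q 5).Adj ![0,1,1,1,0] ![0,0,1,1,0] by decide) (.cons (show (Q 5).Adj ![0,0,1,1,0] ![0,0,0,1,0] by decide) (.nil))))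
def w11 : (Q 5).Walk ![0,0,1,1,0] ![1,1,0,1,1] :=
  .cons (show (Q 5).Adj ![0,0,1,1,0] ![0,0,1,1,1] by decide) (.cons (show (Q 5).Adj ![0,0,1,1,1] ![1,0,1,1,1] by decide) (.cons (show (Q 5).Adj ![1,0,1,1,1] ![1,0,0,1,1] by decide) (.cons (show (Q 5).Adj ![1,0,0,1,1] ![1,1,0,1,1] by decide) (.nil))))
def w12 : (Q 5).Walk ![1,0,1,0,1] ![0,0,1,1,1] :=
  .cons (show (Q 5).Adj ![1,0,1,0,1] ![0,0,1,0,1] by decide) (.cons (show (Q 5).Adj ![0,0,1,0,1] ![0,1,1,0,1] by decide) (.cons (show (Q 5).Adj ![0,1,1,0,1] ![0,1,1,1,1] by decide) (.cons (show (Q 5).Adj ![0,1,1,1,1] ![0,0,1,1,1] by decide) (.nil))))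
def w13 : (Q 5).Walk ![0,1,1,0,1] ![0,1,0,1,1] :=
  .cons (show (Q 5).Adj ![0,1,1,0,1] ![0,1,0,0,1] by decide) (.cons (show (Q 5).Adj ![0,1,0,0,1] ![1,1,0,0,1] by decide) (.cons (show (Q 5).Adj ![1,1,0,0,1] ![1,1,0,1,1] by decide) (.cons (show (Q 5).Adj ![1,1,0,1,1] ![0,1,0,1,1] by decide) (.nil))))
def w14 : (Q 5).Walk ![0,1,1,1,1] ![0,0,0,0,0] :=
  .cons (show (Q 5).Adj ![0,1,1,1,1] ![0,1,0,1,1] by decide) (.cons (show (Q 5).Adj ![0,1,0,1,1] ![0,1,0,0,1] by decide) (.cons (show (Q 5).Adj ![0,1,0,0,1] ![0,1,0,0,0] by decide) (.cons (show (Q 5).Adj ![0,1,0,0,0] ![0,0,0,0,0] by decide) (.nil))))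
def w15 : (Q 5).Walk ![0,1,0,0,0] ![1,0,0,1,1] :=
  .cons (show (Q 5).Adj ![0,1,0,0,0] ![0,1,0,1,0] by decide) (.cons (show (Q 5).Adj ![0,1,0,1,0] ![1,1,0,1,0] by decide) (.cons (show (Q 5).Adj ![1,1,0,1,0] ![1,0,0,1,0] by decide) (.cons (show (Q 5).Adj ![1,0,0,1,0] ![1,0,0,1,1] by decide) (.nil))))
def w16 : (Q 5).Walk ![0,1,0,0,1] ![0,0,0,1,1] :=
  .cons (show (Q 5).Adj ![0,1,0,0,1] ![0,0,0,0,1] by decide) (.cons (show (Q 5).Adj ![0,0,0,0,1] ![0,0,1,0,1] by decide) (.cons (show (Q 5).Adj ![0,0,1,0,1] ![0,0,1,1,1] by decide) (.cons (show (Q 5).Adj ![0,0,1,1,1] ![0,0,0,1,1] by decide) (.nil))))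
def w17 : (Q 5).Walk ![1,1,0,0,1] ![0,1,0,1,1] :=
  .cons (show (Q 5).Adj ![1,1,0,0,1] ![1,0,0,0,1] by decide) (.cons (show (Q 5).Adj ![1,0,0,0,1] ![1,0,0,1,1] by decide) (.cons (show (Q 5).Adj ![1,0,0,1,1] ![0,0,0,1,1] by decide) (.cons (show (Q 5).Adj ![0,0,0,1,1] ![0,1,0,1,1] by decide) (.nil))))
def w18 : (Q 5).Walk ![1,0,0,0,1] ![1,0,0,1,0] :=
  .cons (show (Q 5).Adj ![1,0,0,0,1] ![0,0,0,0,1] by decide) (.cons (show (Q 5).Adj ![0,0,0,0,1] ![0,0,0,0,0] by decide) (.cons (show (Q 5).Adj ![0,0,0,0,0] ![0,0,0,1,0] by decide) (.cons (show (Q 5).Adj ![0,0,0,1,0] ![1,0,0,1,0] by decide) (.nil))))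
def w19 : (Q 5).Walk ![0,1,0,1,1] ![0,0,0,0,1] :=
  .cons (show (Q 5).Adj ![0,1,0,1,1] ![0,1,0,1,0] by decide) (.cons (show (Q 5).Adj ![0,1,0,1,0] ![0,0,0,1,0] by decide) (.cons (show (Q 5).Adj ![0,0,0,1,0] ![0,0,0,1,1] by decide) (.cons (show (Q 5).Adj ![0,0,0,1,1] ![0,0,0,0,1] by decide) (.nil))))

def ws : Fin 20 → Σ (u : Fin 5 → ZMod 2) (v : Fin 5 → ZMod 2), (Q 5).Walk u v :=
  ![⟨_,_,w0⟩, ⟨_,_,w1⟩, ⟨_,_,w2⟩, ⟨_,_,w3⟩, ⟨_,_,w4⟩, ⟨_,_,w5⟩, ⟨_,_,w6⟩, ⟨_,_,w7⟩, ⟨_,_,w8⟩, ⟨_,_,w9⟩, ⟨_,_,w10⟩, ⟨_,_,w11⟩, ⟨_,_,w12⟩, ⟨_,_,w13⟩, ⟨_,_,w14⟩, ⟨_,_,w15⟩, ⟨_,_,w16⟩, ⟨_,_,w17⟩, ⟨_,_,w18⟩, ⟨_,_,w19⟩]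


set_option maxHeartbeats 16000000 in
set_option maxRecDepth 100000 in
set_option synthInstance.maxHeartbeats 1000000 in
theorem q5_decomp : PathDecomp (Q 5) 4 := by
  refine ⟨Fin 20, fun i => (ws i).1, fun i => (ws i).2.1, fun i => (ws i).2.2, ?_, ?_⟩
  · intro i
    fin_cases i <;>
      exact ⟨(SimpleGraph.Walk.isPath_def _).mpr (by decide), by decide⟩
  · have h : ∀ x y : Fin 5 → ZMod 2, (Q 5).Adj x y →
        ∃ i : Fin 20, s(x, y) ∈ ((ws i).2.2).edges ∧
          ∀ j : Fin 20, s(x, y) ∈ ((ws j).2.2).edges → j = i := by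
      letI i1 : ∀ x y : Fin 5 → ZMod 2, Decidable ((Q 5).Adj x y →
          ∃ i : Fin 20, s(x, y) ∈ ((ws i).2.2).edges ∧
            ∀ j : Fin 20, s(x, y) ∈ ((ws j).2.2).edges → j = i) :=
        fun x y => inferInstance
      letI i2 : DecidablePred (fun x : Fin 5 → ZMod 2 => ∀ y, (Q 5).Adj x y →
          ∃ i : Fin 20, s(x, y) ∈ ((ws i).2.2).edges ∧
            ∀ j : Fin 20, s(x, y) ∈ ((ws j).2.2).edges → j = i) :=
        fun x => Fintype.decidableForallFintype (p := fun y => _)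
      letI i3 : Decidable (∀ x y : Fin 5 → ZMod 2, (Q 5).Adj x y →
          ∃ i : Fin 20, s(x, y) ∈ ((ws i).2.2).edges ∧
            ∀ j : Fin 20, s(x, y) ∈ ((ws j).2.2).edges → j = i) :=
        Fintype.decidableForallFintype (p := fun x => _)
      decide
    intro e he
    induction e using Sym2.ind with
    | _ x y => exact h x y ((SimpleGraph.mem_edgeSet (Q 5)).mp he)
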